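/- Let G' = (V',E') be a finite simple graph, r a positive integer, G = G(G',r) the gadget graph, X = A₁ ∪ A₂ ∪ B, and γ_r = (r²+r−1)/(2r²+2r−1). If L ⊆ V' is a clique of size r in G', then Q = X ∪ L is a γ_r-quasi-clique in G; here |Q| = 2r²+2r and ⌈γ_r·(|Q|−1)⌉ = r²+r−1, and every vertex of Q has degree at least r²+r−1 in G[Q]. -/

import Mathlib

open SimpleGraph Set

/-- Vertex type of the gadget graph: the original vertices `V`, plus
`A₁` and `A₂` (each of size `r²`) and `B` (of size `r`). -/
abbrev GadgetV (V : Type*) (r : ℕ) : Type _ := V ⊕ (Fin (r ^ 2) ⊕ Fin (r ^ 2) ⊕ Fin r)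

/-- Membership in `A₁`. -/
def isA1 {V : Type*} {r : ℕ} : GadgetV V r → Prop
  | Sum.inr (Sum.inl _) => True
  | _ => False

/-- Membership in `A₂`. -/
def isA2 {V : Type*} {r : ℕ} : GadgetV V r → Prop
  | Sum.inr (Sum.inr (Sum.inl _)) => True
  | _ => False

/-- Membership in `B`. -/
def isB {V : Type*} {r : ℕ} : GadgetV V r → Prop
  | Sum.inr (Sum.inr (Sum.inr _)) => True
  | _ => False

/-- The gadget graph `G(G',r)`: all edges of `G'`, `A₁`, `A₂`, `B` are cliques,
all pairs between `A₁` and `A₂`, between `A₁` and `B`, and between `A₁` and `V'`.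
(A vertex of `A₁` is adjacent to every other vertex.) -/
def gadget {V : Type*} (G' : SimpleGraph V) (r : ℕ) : SimpleGraph (GadgetV V r) :=
  SimpleGraph.fromRel fun a b =>
    isA1 a ∨ (∃ u v, a = Sum.inl u ∧ b = Sum.inl v ∧ G'.Adj u v) ∨
      (isA2 a ∧ isA2 b) ∨ (isB a ∧ isB b)

/-- The set `X = A₁ ∪ A₂ ∪ B`. -/
def Xset (V : Type*) (r : ℕ) : Set (GadgetV V r) := {x | isA1 x ∨ isA2 x ∨ isB x}

/-- Degree of a vertex `v` in the subgraph of `G` induced on `Q`: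
the number of neighbors of `v` lying in `Q`. -/
noncomputable def degIn {W : Type*} (G : SimpleGraph W) (Q : Set W) (v : W) : ℕ :=
  (Q ∩ G.neighborSet v).ncard

/-- `Q` is a `γ`-quasi-clique in `G`: the induced subgraph `G[Q]` is connected and
every vertex of `Q` has degree at least `⌈γ·(|Q|-1)⌉` in `G[Q]`. -/
def IsQuasiClique {W : Type*} (G : SimpleGraph W) (γ : ℚ) (Q : Set W) : Prop :=
  (G.induce Q).Connected ∧ ∀ v ∈ Q, ⌈γ * ((Q.ncard : ℚ) - 1)⌉ ≤ (degIn G Q v : ℤ)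

/-- `γ_r = (r²+r−1)/(2r²+2r−1)`. -/
def gammaR (r : ℕ) : ℚ := ((r : ℚ) ^ 2 + r - 1) / (2 * (r : ℚ) ^ 2 + 2 * r - 1)

section Aux

variable {V : Type*} {r : ℕ}

/-- The set `A₁` as a set of gadget vertices. -/
def A1set (V : Type*) (r : ℕ) : Set (GadgetV V r) := {x | isA1 x}
/-- The set `A₂` as a set of gadget vertices. -/
def A2set (V : Type*) (r : ℕ) : Set (GadgetV V r) := {x | isA2 x}
/-- The set `B` as a set of gadget vertices. -/
def Bset (V : Type*) (r : ℕ) : Set (GadgetV V r) := {x | isB x}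

lemma A1set_eq : A1set V r = Set.range (fun i : Fin (r ^ 2) => (Sum.inr (Sum.inl i) : GadgetV V r)) := by
  ext x; rcases x with u | i | j | k <;> simp [A1set, isA1]

lemma A2set_eq : A2set V r = Set.range (fun i : Fin (r ^ 2) => (Sum.inr (Sum.inr (Sum.inl i)) : GadgetV V r)) := by
  ext x; rcases x with u | i | j | k <;> simp [A2set, isA2]

lemma Bset_eq : Bset V r = Set.range (fun i : Fin r => (Sum.inr (Sum.inr (Sum.inr i)) : GadgetV V r)) := by
  ext x; rcases x with u | i | j | k <;> simp [Bset, isB]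

lemma ncard_range_inj {α β : Type*} [Finite β] {f : α → β} [Fintype α] (hf : Function.Injective f) :
    (Set.range f).ncard = Fintype.card α := by
  rw [← Set.image_univ, Set.ncard_image_of_injective _ hf, Set.ncard_univ, Nat.card_eq_fintype_card]

lemma ncard_A1set [Fintype V] : (A1set V r).ncard = r ^ 2 := by
  rw [A1set_eq, ncard_range_inj (fun a b h => by simpa using h)]; simp

lemma ncard_A2set [Fintype V] : (A2set V r).ncard = r ^ 2 := by
  rw [A2set_eq, ncard_range_inj (fun a b h => by simpa using h)]; simp

lemma ncard_Bset [Fintype V] : (Bset V r).ncard = r := by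
  rw [Bset_eq, ncard_range_inj (fun a b h => by simpa using h)]; simp

lemma Xset_eq : Xset V r = A1set V r ∪ (A2set V r ∪ Bset V r) := rfl

lemma gadget_adj {G' : SimpleGraph V} {a b : GadgetV V r} :
    (gadget G' r).Adj a b ↔ a ≠ b ∧
      ((isA1 a ∨ (∃ u v, a = Sum.inl u ∧ b = Sum.inl v ∧ G'.Adj u v) ∨
        (isA2 a ∧ isA2 b) ∨ (isB a ∧ isB b)) ∨
       (isA1 b ∨ (∃ u v, b = Sum.inl u ∧ a = Sum.inl v ∧ G'.Adj u v) ∨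
        (isA2 b ∧ isA2 a) ∨ (isB b ∧ isB a))) :=
  SimpleGraph.fromRel_adj _ a b

lemma adj_of_A1 {G' : SimpleGraph V} {a b : GadgetV V r} (ha : isA1 a) (hne : a ≠ b) :
    (gadget G' r).Adj a b :=
  gadget_adj.mpr ⟨hne, Or.inl (Or.inl ha)⟩

lemma adj_of_A2 {G' : SimpleGraph V} {a b : GadgetV V r} (ha : isA2 a) (hb : isA2 b) (hne : a ≠ b) :
    (gadget G' r).Adj a b :=
  gadget_adj.mpr ⟨hne, Or.inl (Or.inr (Or.inr (Or.inl ⟨ha, hb⟩)))⟩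

lemma adj_of_B {G' : SimpleGraph V} {a b : GadgetV V r} (ha : isB a) (hb : isB b) (hne : a ≠ b) :
    (gadget G' r).Adj a b :=
  gadget_adj.mpr ⟨hne, Or.inl (Or.inr (Or.inr (Or.inr ⟨ha, hb⟩)))⟩

lemma adj_of_L {G' : SimpleGraph V} {u v : V} (h : G'.Adj u v) :
    (gadget G' r).Adj (Sum.inl u) (Sum.inl v) :=
  gadget_adj.mpr ⟨by simpa using h.ne, Or.inl (Or.inr (Or.inl ⟨u, v, rfl, rfl, h⟩))⟩

end Aux

/-- If `L ⊆ V'` is a clique of size `r` in `G'`, then `Q = X ∪ L` is a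
`γ_r`-quasi-clique in the gadget graph; here `|Q| = 2r²+2r`,
`⌈γ_r·(|Q|−1)⌉ = r²+r−1`, and every vertex of `Q` has degree at least
`r²+r−1` in `G[Q]`. -/
theorem stmt_5 {V : Type*} [Fintype V] (G' : SimpleGraph V) (r : ℕ) (hr : 0 < r)
    (L : Finset V) (hL : G'.IsNClique r L) :
    IsQuasiClique (gadget G' r) (gammaR r) (Xset V r ∪ Sum.inl '' (L : Set V)) ∧
      (Xset V r ∪ Sum.inl '' (L : Set V)).ncard = 2 * r ^ 2 + 2 * r ∧
      ⌈gammaR r * ((2 * (r : ℚ) ^ 2 + 2 * r) - 1)⌉ = (r : ℤ) ^ 2 + r - 1 ∧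
      ∀ v ∈ Xset V r ∪ Sum.inl '' (L : Set V),
        r ^ 2 + r - 1 ≤ degIn (gadget G' r) (Xset V r ∪ Sum.inl '' (L : Set V)) v := by
  classical
  set Ls : Set (GadgetV V r) := Sum.inl '' (L : Set V) with hLsdef
  set Q : Set (GadgetV V r) := Xset V r ∪ Ls with hQdef
  -- disjointness facts
  have h12 : Disjoint (A1set V r) (A2set V r) := by
    rw [Set.disjoint_left]; intro x h1 h2
    rcases x with u | i | j | k <;> simp_all [A1set, A2set, isA1, isA2]
  have h1B : Disjoint (A1set V r) (Bset V r) := by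
    rw [Set.disjoint_left]; intro x h1 h2
    rcases x with u | i | j | k <;> simp_all [A1set, Bset, isA1, isB]
  have h2B : Disjoint (A2set V r) (Bset V r) := by
    rw [Set.disjoint_left]; intro x h1 h2
    rcases x with u | i | j | k <;> simp_all [A2set, Bset, isA2, isB]
  have h1L : Disjoint (A1set V r) Ls := by
    rw [Set.disjoint_left]; rintro x h1 ⟨u, hu, rfl⟩
    simp [A1set, isA1] at h1
  have h2L : Disjoint (A2set V r) Ls := by
    rw [Set.disjoint_left]; rintro x h1 ⟨u, hu, rfl⟩
    simp [A2set, isA2] at h1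
  have hBL : Disjoint (Bset V r) Ls := by
    rw [Set.disjoint_left]; rintro x h1 ⟨u, hu, rfl⟩
    simp [Bset, isB] at h1
  have hLscard : Ls.ncard = r := by
    rw [hLsdef, Set.ncard_image_of_injective _ Sum.inl_injective, Set.ncard_coe_finset, hL.2]
  have hQsplit : Q = A1set V r ∪ (A2set V r ∪ (Bset V r ∪ Ls)) := by
    rw [hQdef, Xset_eq, Set.union_assoc, Set.union_assoc]
  have hQcard : Q.ncard = 2 * r ^ 2 + 2 * r := by
    rw [hQsplit, Set.ncard_union_eq (by
          exact Set.disjoint_union_right.mpr ⟨h12, Set.disjoint_union_right.mpr ⟨h1B, h1L⟩⟩),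
        Set.ncard_union_eq (Set.disjoint_union_right.mpr ⟨h2B, h2L⟩),
        Set.ncard_union_eq hBL, ncard_A1set, ncard_A2set, ncard_Bset, hLscard]
    ring
  -- ceiling computation
  have hr1 : (1 : ℚ) ≤ (r : ℚ) := by exact_mod_cast hr
  have hden : (2 : ℚ) * (r : ℚ) ^ 2 + 2 * (r : ℚ) - 1 ≠ 0 := by nlinarith
  have hmul : gammaR r * (2 * (r : ℚ) ^ 2 + 2 * (r : ℚ) - 1) = (r : ℚ) ^ 2 + (r : ℚ) - 1 := by
    rw [gammaR]; exact div_mul_cancel₀ _ hden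
  have hceil : ⌈gammaR r * (2 * (r : ℚ) ^ 2 + 2 * (r : ℚ) - 1)⌉ = (r : ℤ) ^ 2 + r - 1 := by
    rw [hmul, show ((r : ℚ) ^ 2 + (r : ℚ) - 1) = (((r : ℤ) ^ 2 + (r : ℤ) - 1 : ℤ) : ℚ) by
      push_cast; ring, Int.ceil_intCast]
  -- membership of the pieces in Q
  have hA1Q : A1set V r ⊆ Q := fun x hx => Or.inl (Or.inl hx)
  have hA2Q : A2set V r ⊆ Q := fun x hx => Or.inl (Or.inr (Or.inl hx))
  have hBQ : Bset V r ⊆ Q := fun x hx => Or.inl (Or.inr (Or.inr hx))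
  have hLQ : Ls ⊆ Q := fun x hx => Or.inr hx
  -- degree bounds
  have hdeg : ∀ v ∈ Q, r ^ 2 + r - 1 ≤ degIn (gadget G' r) Q v := by
    intro v hv
    have hvQ := hv
    rcases hv with (h1 | h2 | h3) | hl
    · -- v ∈ A₁ : everything else is a neighbor
      have hsub : Q \ {v} ⊆ Q ∩ (gadget G' r).neighborSet v := by
        rintro x ⟨hxQ, hxv⟩
        exact ⟨hxQ, adj_of_A1 h1 (fun e => hxv e.symm)⟩
      have hle := Set.ncard_le_ncard hsub (Set.toFinite _)
      rw [Set.ncard_diff_singleton_of_mem hvQ, hQcard] at hle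
      have : r ^ 2 + r - 1 ≤ 2 * r ^ 2 + 2 * r - 1 := by
        have : 1 ≤ r ^ 2 := Nat.one_le_pow _ _ hr
        omega
      exact le_trans this hle
    · -- v ∈ A₂
      have hv2 : v ∈ A2set V r := h2
      have hsub : A1set V r ∪ (A2set V r \ {v}) ⊆ Q ∩ (gadget G' r).neighborSet v := by
        rintro x (hx | ⟨hx2, hxv⟩)
        · refine ⟨hA1Q hx, (adj_of_A1 hx ?_).symm⟩
          intro e; exact Set.disjoint_left.mp h12 hx (by rwa [e])
        · exact ⟨hA2Q hx2, adj_of_A2 h2 hx2 (fun e => hxv (by simp [e.symm]))⟩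
      have hle := Set.ncard_le_ncard hsub (Set.toFinite _)
      rw [Set.ncard_union_eq (h12.mono_right Set.diff_subset),
        Set.ncard_diff_singleton_of_mem hv2, ncard_A1set, ncard_A2set] at hle
      have hrr : r ≤ r ^ 2 := Nat.le_self_pow two_ne_zero r
      refine le_trans ?_ hle
      omega
    · -- v ∈ B
      have hv3 : v ∈ Bset V r := h3
      have hsub : A1set V r ∪ (Bset V r \ {v}) ⊆ Q ∩ (gadget G' r).neighborSet v := by
        rintro x (hx | ⟨hx3, hxv⟩)
        · refine ⟨hA1Q hx, (adj_of_A1 hx ?_).symm⟩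
          intro e; exact Set.disjoint_left.mp h1B hx (by rwa [e])
        · exact ⟨hBQ hx3, adj_of_B h3 hx3 (fun e => hxv (by simp [e.symm]))⟩
      have hle := Set.ncard_le_ncard hsub (Set.toFinite _)
      rw [Set.ncard_union_eq (h1B.mono_right Set.diff_subset),
        Set.ncard_diff_singleton_of_mem hv3, ncard_A1set, ncard_Bset] at hle
      refine le_trans ?_ hle
      omega
    · -- v ∈ L
      obtain ⟨u, hu, rfl⟩ := hl
      have hvL : (Sum.inl u : GadgetV V r) ∈ Ls := ⟨u, hu, rfl⟩
      have hsub : A1set V r ∪ (Ls \ {Sum.inl u}) ⊆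
          Q ∩ (gadget G' r).neighborSet (Sum.inl u) := by
        rintro x (hx | ⟨⟨w, hw, rfl⟩, hxv⟩)
        · refine ⟨hA1Q hx, (adj_of_A1 hx ?_).symm⟩
          intro e; exact Set.disjoint_left.mp h1L hx (by rw [e]; exact hvL)
        · refine ⟨hLQ ⟨w, hw, rfl⟩, adj_of_L (hL.1 hu hw ?_)⟩
          intro e; exact hxv (by simp [e])
      have hle := Set.ncard_le_ncard hsub (Set.toFinite _)
      rw [Set.ncard_union_eq (h1L.mono_right Set.diff_subset),
        Set.ncard_diff_singleton_of_mem hvL, ncard_A1set, hLscard] at hle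
      refine le_trans ?_ hle
      omega
  -- connectivity
  have hnr2 : 0 < r ^ 2 := pow_pos hr 2
  have ha0 : isA1 (Sum.inr (Sum.inl (⟨0, hnr2⟩ : Fin (r ^ 2))) : GadgetV V r) := trivial
  set a0 : GadgetV V r := Sum.inr (Sum.inl ⟨0, hnr2⟩) with ha0def
  have ha0Q : a0 ∈ Q := Or.inl (Or.inl ha0)
  have hreach : ∀ x : ↥Q, ((gadget G' r).induce Q).Reachable x ⟨a0, ha0Q⟩ := by
    intro x
    by_cases h : (x : GadgetV V r) = a0
    · have : x = ⟨a0, ha0Q⟩ := Subtype.ext h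
      rw [this]
    · apply SimpleGraph.Adj.reachable
      show (gadget G' r).Adj (x : GadgetV V r) a0
      exact (adj_of_A1 ha0 (fun e => h e.symm)).symm
  have hconn : ((gadget G' r).induce Q).Connected := by
    rw [SimpleGraph.connected_iff]
    exact ⟨fun x y => (hreach x).trans (hreach y).symm, ⟨⟨a0, ha0Q⟩⟩⟩
  have hdegZ : ∀ v ∈ Q, ((r : ℤ) ^ 2 + r - 1 : ℤ) ≤ (degIn (gadget G' r) Q v : ℤ) := by
    intro v hv
    have h0 := hdeg v hv
    have h1 : 1 ≤ r ^ 2 + r := by nlinarith [Nat.one_le_pow 2 r hr]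
    zify [h1] at h0
    exact h0
  refine ⟨⟨hconn, ?_⟩, hQcard, hceil, hdeg⟩
  intro v hv
  rw [hQcard, show (((2 * r ^ 2 + 2 * r : ℕ) : ℚ) - 1) = 2 * (r : ℚ) ^ 2 + 2 * (r : ℚ) - 1 by
    push_cast; ring, hceil]
  exact hdegZ v hv
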